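/- If X is a Hausdorff space with the countable chain condition (every family of pairwise disjoint nonempty open sets is countable) in which every point has a countable linked local π-base, then |X| ≤ 2^{ℵ₀}. -/

import Mathlib

open Set Topology Cardinal

universe u

/-- A local π-base at `p`: a family of nonempty open sets such that every open
set containing `p` contains a member of the family. -/
def IsLocalPiBase {X : Type u} [TopologicalSpace X] (p : X) (𝓑 : Set (Set X)) : Prop :=
  (∀ b ∈ 𝓑, IsOpen b ∧ b.Nonempty) ∧
  ∀ U : Set X, IsOpen U → p ∈ U → ∃ b ∈ 𝓑, b ⊆ U

/-- A family of sets is centered if it has the finite intersection property. -/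
def Centered {X : Type u} (𝓑 : Set (Set X)) : Prop :=
  ∀ F : Finset (Set X), F.Nonempty → ↑F ⊆ 𝓑 → (⋂₀ (F : Set (Set X))).Nonempty

/-- A family of sets is linked if any two members meet. -/
def Linked {X : Type u} (𝓑 : Set (Set X)) : Prop :=
  ∀ b₁ ∈ 𝓑, ∀ b₂ ∈ 𝓑, (b₁ ∩ b₂).Nonempty

/-- A decreasing local π-base at `p`, given as a ⊆-decreasing sequence of
nonempty open sets. -/
def IsDecreasingLocalPiBase {X : Type u} [TopologicalSpace X] (p : X) (A : ℕ → Set X) : Prop :=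
  (∀ n, IsOpen (A n) ∧ (A n).Nonempty) ∧
  (∀ n, A (n + 1) ⊆ A n) ∧
  ∀ U : Set X, IsOpen U → p ∈ U → ∃ n, A n ⊆ U

/-- A cellular family: pairwise disjoint nonempty open sets. -/
def IsCellular {X : Type u} [TopologicalSpace X] (𝓒 : Set (Set X)) : Prop :=
  (∀ c ∈ 𝓒, IsOpen c ∧ c.Nonempty) ∧ 𝓒.PairwiseDisjoint id

/-- A weak closed pseudobase at `p`: a family of open sets whose closures
intersect exactly in `{p}`. -/
def IsWeakClosedPseudobase {X : Type u} [TopologicalSpace X] (p : X) (𝓑 : Set (Set X)) : Prop :=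
  (∀ b ∈ 𝓑, IsOpen b) ∧ (⋂ b ∈ 𝓑, closure b) = {p}

/-- A neighborhood base at `p` consisting of open sets containing `p`. -/
def IsNhdBase {X : Type u} [TopologicalSpace X] (p : X) (𝓑 : Set (Set X)) : Prop :=
  (∀ b ∈ 𝓑, IsOpen b ∧ p ∈ b) ∧
  ∀ U : Set X, IsOpen U → p ∈ U → ∃ b ∈ 𝓑, b ⊆ U

section
attribute [local instance] Classical.propDecidable
variable {W : Type u} [LinearOrder W] [WellFoundedLT W]
variable {I : Type u} [LinearOrder I] [WellFoundedLT I]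

noncomputable def erSeq (f : W → W → ℕ) (a : W) : I → W :=
  (wellFounded_lt (α := I)).fix fun γ ih =>
    if hE : {s : W | (∀ δ, ∀ h : δ < γ, ih δ h ≠ s) ∧
        ∀ δ, ∀ h : δ < γ, f (ih δ h) s = f (ih δ h) a}.Nonempty then
      (wellFounded_lt (α := W)).min _ hE
    else a

def erESet (f : W → W → ℕ) (a : W) (γ : I) : Set W :=
  {s : W | (∀ δ, ∀ _ : δ < γ, erSeq f a δ ≠ s) ∧
    ∀ δ, ∀ _ : δ < γ, f (erSeq f a δ) s = f (erSeq f a δ) a}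

theorem erSeq_def (f : W → W → ℕ) (a : W) (γ : I) :
    erSeq f a γ = if hE : (erESet f a γ).Nonempty then
      (wellFounded_lt (α := W)).min _ hE else a := by
  rw [erSeq, WellFounded.fix_eq]
  rfl

theorem erESet_anti (f : W → W → ℕ) (a : W) {δ γ : I} (h : δ ≤ γ) :
    erESet f a γ ⊆ erESet f a δ := fun s hs =>
  ⟨fun δ' h' => hs.1 δ' (lt_of_lt_of_le h' h), fun δ' h' => hs.2 δ' (lt_of_lt_of_le h' h)⟩

variable {f : W → W → ℕ} {a : W}

theorem erSeq_mem {γ : I} (hE : (erESet f a γ).Nonempty) : erSeq f a γ ∈ erESet f a γ := by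
  rw [erSeq_def, dif_pos hE]; exact WellFounded.min_mem _ _ hE

theorem erSeq_le {γ : I} {s : W} (hs : s ∈ erESet f a γ) : erSeq f a γ ≤ s := by
  rw [erSeq_def, dif_pos ⟨s, hs⟩]
  exact le_of_not_gt (WellFounded.not_lt_min _ _ hs)

-- while `a` has not been reached, `a` is eligible
theorem self_mem_erESet {γ : I} (h : ∀ δ, δ < γ → erSeq f a δ ≠ a) : a ∈ erESet f a γ :=
  ⟨h, fun _ _ => rfl⟩

section CaseA
variable (ha : ∀ δ : I, erSeq f a δ ≠ a)
include ha

theorem erSeq_mem' (γ : I) : erSeq f a γ ∈ erESet f a γ :=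
  erSeq_mem ⟨a, self_mem_erESet fun δ _ => ha δ⟩

theorem erSeq_strictMono : StrictMono (erSeq f a : I → W) := by
  intro δ γ h
  have hmem : erSeq f a γ ∈ erESet f a δ := erESet_anti f a h.le (erSeq_mem' ha γ)
  have hne : erSeq f a δ ≠ erSeq f a γ := (erSeq_mem' ha γ).1 δ h
  exact lt_of_le_of_ne (erSeq_le hmem) hne

theorem erSeq_color {δ γ : I} (h : δ < γ) :
    f (erSeq f a δ) (erSeq f a γ) = f (erSeq f a δ) a :=
  (erSeq_mem' ha γ).2 δ h
end CaseA

-- determinism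
theorem erSeq_determined {b : W} : ∀ γ : I,
    (∀ δ, δ < γ → f (erSeq f a δ) a = f (erSeq f b δ) b) →
    (∀ δ, δ < γ → erSeq f a δ ≠ a) → erSeq f a γ = erSeq f b γ := by
  intro γ
  induction γ using (wellFounded_lt (α := I)).induction with
  | _ γ IH =>
    intro htr hna
    have hseq : ∀ δ, δ < γ → erSeq f a δ = erSeq f b δ := fun δ h =>
      IH δ h (fun δ' h' => htr δ' (h'.trans h)) (fun δ' h' => hna δ' (h'.trans h))
    have hset : erESet f a γ = erESet f b γ := by
      ext s
      constructor
      · rintro ⟨h1, h2⟩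
        refine ⟨fun δ h => hseq δ h ▸ h1 δ h, fun δ h => ?_⟩
        rw [← htr δ h, ← hseq δ h]
        exact h2 δ h
      · rintro ⟨h1, h2⟩
        refine ⟨fun δ h => (hseq δ h).symm ▸ h1 δ h, fun δ h => ?_⟩
        rw [htr δ h, hseq δ h]
        exact h2 δ h
    have hEa : (erESet f a γ).Nonempty := ⟨a, self_mem_erESet hna⟩
    have hEb : (erESet f b γ).Nonempty := hset ▸ hEa
    rw [erSeq_def, erSeq_def, hset]
    simp only [dif_pos hEb]

theorem erdos_rado_aux
    (hIio : ∀ γ : I, (Set.Iio γ).Countable) (hI : ¬ Countable I)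
    (hW : #I * Cardinal.continuum < #W) (f : W → W → ℕ) :
    ∃ (H : Set W) (k : ℕ), ¬ H.Countable ∧ ∀ p ∈ H, ∀ q ∈ H, p < q → f p q = k := by
  by_cases hhit : ∀ a : W, ∃ γ : I, erSeq f a γ = a
  · exfalso
    have hmin : ∀ a : W, ∃ γ : I, erSeq f a γ = a ∧ ∀ δ, δ < γ → erSeq f a δ ≠ a := by
      intro a
      obtain ⟨γ, hγ⟩ := hhit a
      have hne : {γ : I | erSeq f a γ = a}.Nonempty := ⟨γ, hγ⟩
      refine ⟨(wellFounded_lt (α := I)).min _ hne,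
        (wellFounded_lt (α := I)).min_mem _ hne, fun δ hδ hδa => ?_⟩
      exact (wellFounded_lt (α := I)).not_lt_min _ hδa hδ
    set A : I → Set W := fun γ => {a | erSeq f a γ = a ∧ ∀ δ, δ < γ → erSeq f a δ ≠ a} with hA
    have hcov : (Set.univ : Set W) = ⋃ γ, A γ := by
      apply Set.eq_of_subset_of_subset _ (Set.subset_univ _)
      intro a _
      obtain ⟨γ, h1, h2⟩ := hmin a
      exact Set.mem_iUnion.mpr ⟨γ, h1, h2⟩
    have hAcard : ∀ γ, #(A γ) ≤ Cardinal.continuum.{u} := by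
      intro γ
      have hcnt : Countable ↥(Set.Iio γ) := (hIio γ).to_subtype
      obtain ⟨e, he⟩ := exists_injective_nat ↥(Set.Iio γ)
      set F : ↥(A γ) → ULift.{u} (ℕ → ℕ) := fun a =>
        ⟨fun n => if h : ∃ δ : ↥(Set.Iio γ), e δ = n then
          f (erSeq f a.1 (h.choose).1) a.1 else 0⟩ with hF
      have hFinj : Function.Injective F := by
        intro a b hab
        have htr : ∀ δ, δ < γ → f (erSeq f a.1 δ) a.1 = f (erSeq f b.1 δ) b.1 := by
          intro δ hδ
          have hx : ∃ δ'' : ↥(Set.Iio γ), e δ'' = e ⟨δ, hδ⟩ := ⟨⟨δ, hδ⟩, rfl⟩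
          have hxc : hx.choose = ⟨δ, hδ⟩ := he hx.choose_spec
          have := congrFun (congrArg ULift.down hab) (e ⟨δ, hδ⟩)
          simp only [hF, dif_pos hx] at this
          rwa [hxc] at this
        have hseqγ : erSeq f a.1 γ = erSeq f b.1 γ :=
          erSeq_determined γ htr a.2.2
        exact Subtype.ext (a.2.1 ▸ b.2.1 ▸ hseqγ)
      calc #(A γ) ≤ #(ULift.{u} (ℕ → ℕ)) := Cardinal.mk_le_of_injective hFinj
        _ = Cardinal.lift.{u} #(ℕ → ℕ) := Cardinal.mk_uLift _
        _ = Cardinal.continuum.{u} := by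
            rw [← Cardinal.power_def, Cardinal.mk_nat, Cardinal.aleph0_power_aleph0,
              Cardinal.lift_continuum]
    have : #W ≤ #I * Cardinal.continuum.{u} := by
      calc #W = #(Set.univ : Set W) := (Cardinal.mk_univ).symm
        _ = #(⋃ γ, A γ) := by rw [hcov]
        _ ≤ Cardinal.sum (fun γ => #(A γ)) := Cardinal.mk_iUnion_le_sum_mk
        _ ≤ Cardinal.sum (fun _ : I => Cardinal.continuum.{u}) :=
            Cardinal.sum_le_sum _ _ hAcard
        _ = #I * Cardinal.continuum.{u} := Cardinal.sum_const' _ _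
    exact absurd this (not_le_of_gt hW)
  · push_neg at hhit
    obtain ⟨a, ha⟩ := hhit
    set t : I → ℕ := fun δ => f (erSeq f a δ) a with ht
    have hex : ∃ k, ¬ (t ⁻¹' {k}).Countable := by
      by_contra h
      push_neg at h
      have huniv : (Set.univ : Set I).Countable := by
        have : (Set.univ : Set I) = ⋃ k : ℕ, t ⁻¹' {k} := by
          ext δ; simp
        rw [this]
        exact Set.countable_iUnion h
      exact hI (Set.countable_univ_iff.mp huniv)
    obtain ⟨k, hk⟩ := hex
    refine ⟨erSeq f a '' (t ⁻¹' {k}), k, ?_, ?_⟩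
    · intro hcnt
      exact hk (Set.countable_of_injective_of_countable_image
        ((erSeq_strictMono ha).injective.injOn) hcnt)
    · rintro p ⟨δ, hδ, rfl⟩ q ⟨γ, hγ, rfl⟩ hlt
      have hδγ : δ < γ := by
        rcases lt_trichotomy δ γ with h | h | h
        · exact h
        · rw [h] at hlt; exact absurd hlt (lt_irrefl _)
        · exact absurd (erSeq_strictMono ha h) (not_lt_of_gt hlt)
      rw [erSeq_color ha hδγ]
      exact hδ
end


/-- a ccc Hausdorff space in which every point has a countable linked
local π-base has cardinality at most 𝔠 = 2^ℵ₀. -/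
theorem card_le_continuum_of_ccc_and_countable_linked
    {X : Type u} [TopologicalSpace X] [T2Space X]
    (hc : ∀ 𝓒 : Set (Set X), IsCellular 𝓒 → 𝓒.Countable)
    (hπ : ∀ p : X, ∃ 𝓑 : Set (Set X), 𝓑.Countable ∧ IsLocalPiBase p 𝓑 ∧ Linked 𝓑) :
    #X ≤ 2 ^ ℵ₀ := by
  classical
  by_contra hX
  rw [Cardinal.two_power_aleph0, not_le] at hX
  -- enumerated π-bases
  choose B hBc hBp hBl using hπ
  have hBne : ∀ p : X, (B p).Nonempty := by
    intro p
    obtain ⟨b, hb, -⟩ := (hBp p).2 Set.univ isOpen_univ (Set.mem_univ p)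
    exact ⟨b, hb⟩
  have henum : ∀ p : X, ∃ g : ℕ → Set X, B p = Set.range g := fun p =>
    (hBc p).exists_eq_range (hBne p)
  choose b hb using henum
  have hbmem : ∀ (p : X) (n : ℕ), b p n ∈ B p := by
    intro p n; rw [hb p]; exact Set.mem_range_self n
  -- disjoint pairs from Hausdorffness
  have key : ∀ p q : X, p ≠ q → ∃ k : ℕ, b p k.unpair.1 ∩ b q k.unpair.2 = ∅ := by
    intro p q hpq
    obtain ⟨U, V, hU, hV, hpU, hqV, hUV⟩ := t2_separation hpq
    obtain ⟨c, hc', hcU⟩ := (hBp p).2 U hU hpU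
    obtain ⟨d, hd', hdV⟩ := (hBp q).2 V hV hqV
    rw [hb p] at hc'; rw [hb q] at hd'
    obtain ⟨n, rfl⟩ := hc'
    obtain ⟨m, rfl⟩ := hd'
    refine ⟨Nat.pair n m, ?_⟩
    rw [Nat.unpair_pair]
    apply Set.eq_empty_of_subset_empty
    calc b p n ∩ b q m ⊆ U ∩ V := Set.inter_subset_inter hcU hdV
      _ = ∅ := Set.disjoint_iff_inter_eq_empty.mp hUV
  -- set up the types for Erdős–Rado
  set W : Type u := ((Order.succ (Cardinal.continuum.{u})).ord).ToType with hWdef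
  set I : Type u := ((Cardinal.aleph 1 : Cardinal.{u}).ord).ToType with hIdef
  have hmkW : #W = Order.succ (Cardinal.continuum.{u}) := by
    rw [hWdef, Cardinal.mk_toType, Cardinal.card_ord]
  have hmkI : #I = Cardinal.aleph 1 := by
    rw [hIdef, Cardinal.mk_toType, Cardinal.card_ord]
  have hWX : #W ≤ #X := by
    rw [hmkW]; exact Order.succ_le_of_lt hX
  obtain ⟨ι⟩ := Cardinal.le_def W X |>.mp hWX
  -- the coloring
  set f : W → W → ℕ := fun x y =>
    if h : ι x = ι y then 0 else (key (ι x) (ι y) h).choose with hf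
  have hIio : ∀ γ : I, (Set.Iio γ).Countable := fun γ =>
    (countable_iff_lt_aleph_one _).mpr (Cardinal.mk_Iio_ord_toType γ)
  have hI : ¬ Countable I := by
    intro h
    have := Cardinal.mk_le_aleph0 (α := I)
    rw [hmkI] at this
    exact absurd (Cardinal.aleph0_lt_aleph_one) (not_lt_of_ge this)
  have hWcard : #I * Cardinal.continuum.{u} < #W := by
    rw [hmkI, hmkW, Cardinal.mul_eq_max (Cardinal.aleph0_le_aleph 1)
      Cardinal.aleph0_le_continuum, max_eq_right Cardinal.aleph_one_le_continuum]
    exact Order.lt_succ _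
  obtain ⟨H, k, hHc, hhom⟩ := erdos_rado_aux hIio hI hWcard f
  -- the candidate cellular family
  set g : W → Set X := fun x => b (ι x) k.unpair.1 ∩ b (ι x) k.unpair.2 with hg
  have hgopen : ∀ x : W, IsOpen (g x) ∧ (g x).Nonempty := by
    intro x
    refine ⟨(((hBp (ι x)).1 _ (hbmem _ _)).1.inter ((hBp (ι x)).1 _ (hbmem _ _)).1), ?_⟩
    exact hBl (ι x) _ (hbmem _ _) _ (hbmem _ _)
  have hdisj : ∀ x ∈ H, ∀ y ∈ H, x < y → g x ∩ g y = ∅ := by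
    intro x hx y hy hxy
    have hne : ι x ≠ ι y := fun h => (ne_of_lt hxy) (ι.injective h)
    have hcol : f x y = k := hhom x hx y hy hxy
    have hspec := (key (ι x) (ι y) hne).choose_spec
    rw [hf] at hcol
    simp only [dif_neg hne] at hcol
    rw [hcol] at hspec
    apply Set.eq_empty_of_subset_empty
    calc g x ∩ g y ⊆ b (ι x) k.unpair.1 ∩ b (ι y) k.unpair.2 :=
          Set.inter_subset_inter Set.inter_subset_left Set.inter_subset_right
      _ = ∅ := hspec
  have hdisj' : ∀ x ∈ H, ∀ y ∈ H, x ≠ y → g x ∩ g y = ∅ := by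
    intro x hx y hy hxy
    rcases lt_or_gt_of_ne hxy with h | h
    · exact hdisj x hx y hy h
    · rw [Set.inter_comm]; exact hdisj y hy x hx h
  have hcell : IsCellular (g '' H) := by
    constructor
    · rintro c ⟨x, -, rfl⟩
      exact hgopen x
    · rintro c ⟨x, hx, rfl⟩ d ⟨y, hy, rfl⟩ hne
      have hxy : x ≠ y := fun h => hne (by rw [h])
      exact Set.disjoint_iff_inter_eq_empty.mpr (hdisj' x hx y hy hxy)
  have hcnt : (g '' H).Countable := hc _ hcell
  apply hHc
  apply Set.countable_of_injective_of_countable_image _ hcnt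
  intro x hx y hy hgxy
  by_contra hxy
  have := hdisj' x hx y hy hxy
  rw [hgxy, Set.inter_self] at this
  exact (hgopen y).2.ne_empty this
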